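/- Let R be an associative unital ℂ-algebra and n ≥ 2. Then the derived Lie subalgebra 𝔰𝔩_n(R) = [𝔤𝔩_n(R), 𝔤𝔩_n(R)] equals the set of n×n matrices X over R whose trace lies in the ℂ-linear span of the commutators {ab − ba : a, b ∈ R}. Equivalently, 𝔰𝔩_n(R) is the sum of the space of n×n matrices over R with trace zero and the space of scalar matrices c·I with c in the ℂ-linear span of {ab − ba : a, b ∈ R}. -/

import Mathlib

/-!
STATEMENT 0: For an associative unital ℂ-algebra `R` and `n ≥ 2`, the derived Lie
subalgebra `𝔰𝔩_n(R) = [𝔤𝔩_n(R), 𝔤𝔩_n(R)]` (the ℂ-linear span of all brackets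
`⁅X,Y⁆ = XY - YX` of `n × n` matrices over `R`) equals the set of matrices whose trace
lies in the ℂ-linear span of the commutators `{ab - ba : a b ∈ R}`; equivalently it is
the sum of the trace-zero matrices and the scalar matrices `c • 1` with `c` in that span.
-/



open Matrix

section aux
variable (R : Type) [Ring R] [Algebra ℂ R] (n : ℕ)

def Smod : Submodule ℂ (Matrix (Fin n) (Fin n) R) :=
  Submodule.span ℂ {X : Matrix (Fin n) (Fin n) R | ∃ A B, X = A * B - B * A}

def Cmod : Submodule ℂ R := Submodule.span ℂ {c : R | ∃ a b, c = a * b - b * a}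

variable {R n}

lemma E_sub (i j : Fin n) (x y : R) :
    Matrix.single i j (x - y) = Matrix.single i j x - Matrix.single i j y := by
  ext a b
  simp only [Matrix.single, of_apply, Matrix.sub_apply]
  split <;> simp

lemma E_sum {ι : Type*} (s : Finset ι) (i j : Fin n) (d : ι → R) :
    ∑ k ∈ s, Matrix.single i j (d k) = Matrix.single i j (∑ k ∈ s, d k) := by
  ext a b
  simp only [Matrix.single, of_apply, Matrix.sum_apply]
  split <;> simp

lemma offdiag_mem (i j : Fin n) (hij : i ≠ j) (r : R) : Matrix.single i j r ∈ Smod R n := by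
  apply Submodule.subset_span
  refine ⟨Matrix.single i j r, Matrix.single j j 1, ?_⟩
  rw [single_mul_single_same, single_mul_single_of_ne (h := Ne.symm hij), mul_one, sub_zero]

lemma diag_diff_mem (i j : Fin n) (r : R) :
    Matrix.single i i r - Matrix.single j j r ∈ Smod R n := by
  apply Submodule.subset_span
  refine ⟨Matrix.single i j r, Matrix.single j i 1, ?_⟩
  rw [single_mul_single_same, single_mul_single_same, mul_one, one_mul]

lemma diag_comm_mem (i : Fin n) (a b : R) : Matrix.single i i (a * b - b * a) ∈ Smod R n := by
  apply Submodule.subset_span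
  refine ⟨Matrix.single i i a, Matrix.single i i b, ?_⟩
  rw [single_mul_single_same, single_mul_single_same, E_sub]

lemma scalar_mem {c : R} (hc : c ∈ Cmod R) : c • (1 : Matrix (Fin n) (Fin n) R) ∈ Smod R n := by
  induction hc using Submodule.span_induction with
  | mem x hx =>
      obtain ⟨a, b, rfl⟩ := hx
      have : (a * b - b * a) • (1 : Matrix (Fin n) (Fin n) R)
          = ∑ i : Fin n, Matrix.single i i (a * b - b * a) := by
        ext k l
        by_cases h : k = l
        · simp [Matrix.sum_apply, Matrix.one_apply, h, Matrix.single, Finset.sum_ite_eq]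
        · simp only [Matrix.sum_apply, Matrix.one_apply, h, if_neg h, Matrix.smul_apply, smul_zero,
            Matrix.single, of_apply]
          rw [if_neg (by exact fun hf => hf.elim), smul_zero]
          exact (Finset.sum_eq_zero fun x _ => by
            rw [if_neg]; rintro ⟨rfl, rfl⟩; exact h rfl).symm
      rw [this]
      exact Submodule.sum_mem _ fun i _ => diag_comm_mem i a b
  | zero => simp
  | add x y _ _ hx hy => rw [add_smul]; exact Submodule.add_mem _ hx hy
  | smul z x _ hx => rw [smul_assoc]; exact Submodule.smul_mem _ _ hx

lemma trace_zero_mem (hn : 0 < n) (Y : Matrix (Fin n) (Fin n) R) (hY : trace Y = 0) :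
    Y ∈ Smod R n := by
  have i0 : Fin n := ⟨0, hn⟩
  set T : Fin n → Fin n → Matrix (Fin n) (Fin n) R := fun i j =>
    if i = j then Matrix.single i i (Y i i) - Matrix.single i0 i0 (Y i i)
    else Matrix.single i j (Y i j) with hT
  have hmem : ∀ i j, T i j ∈ Smod R n := by
    intro i j
    by_cases h : i = j
    · simp only [hT, h, if_pos rfl]
      exact diag_diff_mem _ _ _
    · simp only [hT, if_neg h]
      exact offdiag_mem i j h _
  have key : Y = ∑ i : Fin n, ∑ j : Fin n, T i j := by
    have h1 : ∀ i j, T i j = Matrix.single i j (Y i j)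
        - (if i = j then Matrix.single i0 i0 (Y i i) else 0) := by
      intro i j
      by_cases h : i = j <;> simp [hT, h]
    calc Y = ∑ i : Fin n, ∑ j : Fin n, Matrix.single i j (Y i j) :=
            matrix_eq_sum_single Y
      _ = ∑ i : Fin n, ∑ j : Fin n, T i j := by
            simp only [h1, Finset.sum_sub_distrib, Finset.sum_ite_eq, Finset.mem_univ, if_pos]
            rw [E_sum]
            have h2 : (∑ i : Fin n, Y i i) = trace Y := rfl
            rw [h2, hY, single_zero, sub_zero]
  rw [key]
  exact Submodule.sum_mem _ fun i _ => Submodule.sum_mem _ fun j _ => hmem i j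

lemma trace_comm_mem (A B : Matrix (Fin n) (Fin n) R) :
    trace (A * B - B * A) ∈ Cmod R := by
  rw [trace_sub]
  have : trace (A * B) - trace (B * A)
      = ∑ i : Fin n, ∑ j : Fin n, (A i j * B j i - B j i * A i j) := by
    simp only [trace, diag, mul_apply, Finset.sum_sub_distrib]
    congr 1
    rw [Finset.sum_comm]
  rw [this]
  exact Submodule.sum_mem _ fun i _ => Submodule.sum_mem _ fun j _ =>
    Submodule.subset_span ⟨_, _, rfl⟩

lemma decomp (hn : 2 ≤ n) (X : Matrix (Fin n) (Fin n) R) (hX : trace X ∈ Cmod R) :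
    ∃ Y t, X = Y + t • (1 : Matrix (Fin n) (Fin n) R) ∧ trace Y = 0 ∧ t ∈ Cmod R := by
  have hn0 : (n : ℂ) ≠ 0 := Nat.cast_ne_zero.mpr (by omega)
  refine ⟨X - ((n : ℂ)⁻¹ • trace X) • 1, (n : ℂ)⁻¹ • trace X, by ring_nf; abel, ?_,
    Submodule.smul_mem _ _ hX⟩
  have h1 : trace (((n : ℂ)⁻¹ • trace X) • (1 : Matrix (Fin n) (Fin n) R))
      = (n : ℕ) • ((n : ℂ)⁻¹ • trace X) := by
    simp [trace, diag, Matrix.one_apply, Finset.sum_const]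
  rw [trace_sub, h1, ← Nat.cast_smul_eq_nsmul ℂ, smul_smul, mul_inv_cancel₀ hn0, one_smul,
    sub_self]

end aux

theorem stmt_0 (R : Type) [Ring R] [Algebra ℂ R] (n : ℕ) (hn : 2 ≤ n) :
    Submodule.span ℂ {X : Matrix (Fin n) (Fin n) R | ∃ A B, X = A * B - B * A}
      = (Submodule.span ℂ {c : R | ∃ a b, c = a * b - b * a}).comap
          (Matrix.traceLinearMap (Fin n) ℂ R)
    ∧ Submodule.span ℂ {X : Matrix (Fin n) (Fin n) R | ∃ A B, X = A * B - B * A}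
      = LinearMap.ker (Matrix.traceLinearMap (Fin n) ℂ R)
        ⊔ Submodule.span ℂ {X : Matrix (Fin n) (Fin n) R |
            ∃ c ∈ Submodule.span ℂ {c : R | ∃ a b, c = a * b - b * a},
              X = c • (1 : Matrix (Fin n) (Fin n) R)} := by
  have hn0 : 0 < n := by omega
  have h1 : Smod R n = (Cmod R).comap (Matrix.traceLinearMap (Fin n) ℂ R) := by
    apply le_antisymm
    · rw [Smod, Submodule.span_le]
      rintro X ⟨A, B, rfl⟩
      exact trace_comm_mem A B
    · intro X hX
      obtain ⟨Y, t, hXYt, hY, ht⟩ := decomp hn X hX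
      rw [hXYt]
      exact Submodule.add_mem _ (trace_zero_mem hn0 Y hY) (scalar_mem ht)
  refine ⟨h1, le_antisymm ?_ ?_⟩
  · intro X hX
    have hX' : X ∈ (Cmod R).comap (Matrix.traceLinearMap (Fin n) ℂ R) := h1 ▸ hX
    obtain ⟨Y, t, hXYt, hY, ht⟩ := decomp hn X hX'
    rw [hXYt]
    exact Submodule.add_mem _ (Submodule.mem_sup_left (LinearMap.mem_ker.mpr hY))
      (Submodule.mem_sup_right (Submodule.subset_span ⟨t, ht, rfl⟩))
  · rw [sup_le_iff]
    refine ⟨fun Y hY => trace_zero_mem hn0 Y (LinearMap.mem_ker.mp hY), ?_⟩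
    rw [Submodule.span_le]
    rintro X ⟨c, hc, rfl⟩
    exact scalar_mem hc
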